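/- Let l₀, q₁, i be integers with l₀ ≥ 1, i ≥ 1 and i + l₀ − 1 ≤ q₁, let l₁, …, l_{q₁} be integers, and set ε = q₁ + l₀ + i + 1. Then l₀·(l₁+⋯+l_{i−1} + i − 1) + Σ_{j=1}^{l₀} (l₀−j)·(l_{i+j−1}−1) + q₁·l₀ + i·(l₀−1) + Σ_{j=1}^{q₁} (q₁−j)·(l_j−1) ≡ Σ_{j=i+l₀}^{q₁} (q₁−j)·(l_j−1) + ε·Σ_{j=i}^{i+l₀−1} (l_j−1) + Σ_{j=1}^{i−1} (q₁−j)·(l_j−1) + l₀·(l₁+⋯+l_{i−1} + q₁ − 1) − i (mod 2). -/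

import Mathlib

/-- Sign computation in the proof that Floer continuations are chain maps
(upper faces of the multiplihedron). -/
theorem stmt4 (l₀ q₁ i : ℕ) (hl₀ : 1 ≤ l₀) (hi : 1 ≤ i) (hiq : i + l₀ - 1 ≤ q₁)
    (l : ℕ → ℤ) (ε : ℤ) (hε : ε = (q₁ : ℤ) + (l₀ : ℤ) + (i : ℤ) + 1) :
    Int.ModEq 2
      ((l₀ : ℤ) * ((∑ j ∈ Finset.Icc 1 (i - 1), l j) + (i : ℤ) - 1)
        + (∑ j ∈ Finset.Icc 1 l₀, ((l₀ : ℤ) - (j : ℤ)) * (l (i + j - 1) - 1))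
        + (q₁ : ℤ) * (l₀ : ℤ) + (i : ℤ) * ((l₀ : ℤ) - 1)
        + (∑ j ∈ Finset.Icc 1 q₁, ((q₁ : ℤ) - (j : ℤ)) * (l j - 1)))
      ((∑ j ∈ Finset.Icc (i + l₀) q₁, ((q₁ : ℤ) - (j : ℤ)) * (l j - 1))
        + ε * (∑ j ∈ Finset.Icc i (i + l₀ - 1), (l j - 1))
        + (∑ j ∈ Finset.Icc 1 (i - 1), ((q₁ : ℤ) - (j : ℤ)) * (l j - 1))
        + (l₀ : ℤ) * ((∑ j ∈ Finset.Icc 1 (i - 1), l j) + (q₁ : ℤ) - 1)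
        - (i : ℤ)) := by
  -- reindexing lemma
  have key : ∀ g : ℕ → ℤ, (∑ j ∈ Finset.Icc i (i + l₀ - 1), g j)
      = ∑ j ∈ Finset.Icc 1 l₀, g (i + j - 1) := by
    intro g
    refine Finset.sum_nbij' (fun j => j - i + 1) (fun j => i + j - 1) ?_ ?_ ?_ ?_ ?_ <;>
      intros a ha <;> simp only [Finset.mem_Icc] at * <;> first | omega | (congr 1; omega)
  -- split the big sum
  have hsplit : Finset.Icc 1 q₁ =
      (Finset.Icc 1 (i-1) ∪ Finset.Icc i (i + l₀ - 1)) ∪ Finset.Icc (i + l₀) q₁ := by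
    ext x; simp only [Finset.mem_Icc, Finset.mem_union]; omega
  have hd1 : Disjoint (Finset.Icc 1 (i-1)) (Finset.Icc i (i + l₀ - 1)) := by
    simp only [Finset.disjoint_left, Finset.mem_Icc]; omega
  have hd2 : Disjoint (Finset.Icc 1 (i-1) ∪ Finset.Icc i (i + l₀ - 1))
      (Finset.Icc (i + l₀) q₁) := by
    simp only [Finset.disjoint_left, Finset.mem_union, Finset.mem_Icc]; omega
  have hT : (∑ j ∈ Finset.Icc 1 q₁, ((q₁:ℤ) - (j:ℤ)) * (l j - 1))
      = (∑ j ∈ Finset.Icc 1 (i-1), ((q₁:ℤ) - (j:ℤ)) * (l j - 1))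
        + (∑ j ∈ Finset.Icc i (i + l₀ - 1), ((q₁:ℤ) - (j:ℤ)) * (l j - 1))
        + (∑ j ∈ Finset.Icc (i + l₀) q₁, ((q₁:ℤ) - (j:ℤ)) * (l j - 1)) := by
    rw [hsplit, Finset.sum_union hd2, Finset.sum_union hd1]
  -- reindexed middle sums
  have hB := key (fun j => ((q₁:ℤ) - (j:ℤ)) * (l j - 1))
  have hE := key (fun j => l j - 1)
  -- combine middle sums termwise
  have hsum : ε * (∑ j ∈ Finset.Icc 1 l₀, (l (i + j - 1) - 1))
      - (∑ j ∈ Finset.Icc 1 l₀, ((q₁:ℤ) - ((i + j - 1 : ℕ):ℤ)) * (l (i + j - 1) - 1))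
      - (∑ j ∈ Finset.Icc 1 l₀, ((l₀:ℤ) - (j:ℤ)) * (l (i + j - 1) - 1))
      = 2 * (∑ j ∈ Finset.Icc 1 l₀, ((i:ℤ) + (j:ℤ)) * (l (i + j - 1) - 1)) := by
    rw [Finset.mul_sum, Finset.mul_sum, ← Finset.sum_sub_distrib, ← Finset.sum_sub_distrib]
    refine Finset.sum_congr rfl fun j hj => ?_
    have h1 : 1 ≤ j := (Finset.mem_Icc.mp hj).1
    have hc : ((i + j - 1 : ℕ):ℤ) = (i:ℤ) + (j:ℤ) - 1 := by omega
    rw [hc, hε]; ring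
  refine Int.ModEq.symm (Int.modEq_iff_dvd.mpr ⟨(l₀:ℤ) * (i:ℤ) - (∑ j ∈ Finset.Icc 1 l₀, ((i:ℤ) + (j:ℤ)) * (l (i + j - 1) - 1)), ?_⟩)
  rw [hT, hB, hE]
  linear_combination -hsum
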